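/- Mutual information identity used in the achievability proof of Theorem 2 (step (a)): let X, U, Z, Y be random variables on a probability space taking values in finite sets, and suppose U and Y are conditionally independent given the pair (X,Z) (i.e., U − (X,Z) − Y is a Markov chain). Then I((X,U);Y) = I(U;Z|X) + I(X;Y) − I(U;Z|(X,Y)), where I((X,U);Y) is the mutual information between the pair (X,U) and Y, I(U;Z|X) is the conditional mutual information of U and Z given X, and I(U;Z|(X,Y)) is the conditional mutual information of U and Z given the pair (X,Y). -/

import Mathlib

open Finset

private lemma negMulLog_div_aux (a b s : ℝ) (hs : s ≠ 0) :
    Real.negMulLog (a * b / s) =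
      b / s * Real.negMulLog a + a / s * Real.negMulLog b
        - a * b / (s * s) * Real.negMulLog s := by
  rw [div_eq_mul_inv, Real.negMulLog_mul, Real.negMulLog_mul]
  have h1 : Real.negMulLog s⁻¹ = s⁻¹ * Real.log s := by
    simp [Real.negMulLog, Real.log_inv]
  have h2 : Real.negMulLog s = -s * Real.log s := by
    simp [Real.negMulLog]
  rw [h1, h2]
  field_simp
  ring

private lemma ci_entropy_key {U Y : Type*} [Fintype U] [Fintype Y] (f : U → Y → ℝ)
    (h0 : ∀ u y, 0 ≤ f u y)
    (hCI : (∑ u, ∑ y, f u y) ≠ 0 → ∀ u y,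
      f u y = (∑ y', f u y') * (∑ u', f u' y) / (∑ u', ∑ y', f u' y')) :
    (∑ u, Real.negMulLog (∑ y, f u y)) + (∑ y, Real.negMulLog (∑ u, f u y)) =
      Real.negMulLog (∑ u, ∑ y, f u y) + ∑ u, ∑ y, Real.negMulLog (f u y) := by
  by_cases hs : (∑ u, ∑ y, f u y) = 0
  · have hz : ∀ u y, f u y = 0 := by
      intro u y
      have h1 : ∀ u ∈ (univ : Finset U), 0 ≤ ∑ y, f u y :=
        fun u _ => Finset.sum_nonneg fun y _ => h0 u y
      have h2 : ∑ y, f u y = 0 := (Finset.sum_eq_zero_iff_of_nonneg h1).mp hs u (mem_univ u)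
      exact le_antisymm (h2 ▸ Finset.single_le_sum (fun y _ => h0 u y) (mem_univ y)) (h0 u y)
    simp [hz]
  · have hcomm : ∑ y, ∑ u, f u y = ∑ u, ∑ y, f u y := Finset.sum_comm
    set s := ∑ u, ∑ y, f u y with hs_def

    have h1 : ∑ u, (∑ y', f u y') / s = 1 := by
      rw [← Finset.sum_div, ← hs_def, div_self hs]
    have step : ∀ u, ∑ y, Real.negMulLog (f u y) =
        Real.negMulLog (∑ y', f u y') + (∑ y', f u y') / s * (∑ y, Real.negMulLog (∑ u', f u' y))
          - (∑ y', f u y') / s * Real.negMulLog s := by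
      intro u
      have : ∀ y, Real.negMulLog (f u y) =
          (∑ u', f u' y) / s * Real.negMulLog (∑ y', f u y')
            + (∑ y', f u y') / s * Real.negMulLog (∑ u', f u' y)
            - (∑ y', f u y') * (∑ u', f u' y) / (s * s) * Real.negMulLog s := by
        intro y
        rw [hCI hs u y]
        exact negMulLog_div_aux _ _ _ hs
      rw [Finset.sum_congr rfl fun y _ => this y]
      rw [Finset.sum_sub_distrib, Finset.sum_add_distrib]
      congr 1
      · congr 1
        · rw [← Finset.sum_mul, ← Finset.sum_div, hcomm, div_self hs, one_mul]
        · rw [← Finset.mul_sum]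
      · rw [← Finset.sum_mul]
        congr 1
        rw [← Finset.sum_div, ← Finset.mul_sum, hcomm]
        rw [mul_comm s s] at *
        rw [← div_div, mul_div_assoc, div_self hs, mul_one]
    rw [Finset.sum_congr rfl fun u _ => step u, Finset.sum_sub_distrib, Finset.sum_add_distrib,
      ← Finset.sum_mul, ← Finset.sum_mul, h1, one_mul, one_mul]
    ring


/-- Shannon entropy of a pmf on a finite type. -/
noncomputable def ent {A : Type*} [Fintype A] (q : A → ℝ) : ℝ :=
  ∑ a, Real.negMulLog (q a)

/-- Mutual information identity used in the achievability proof of Theorem 2: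
if `U − (X,Z) − Y` is a Markov chain (i.e. `U` and `Y` are conditionally independent
given `(X,Z)`), then `I((X,U);Y) = I(U;Z|X) + I(X;Y) − I(U;Z|(X,Y))`, where all
(conditional) mutual informations are expressed via Shannon entropies of the joint pmf
`p` of `(X,U,Z,Y)`:  `I(A;B) = H(A) + H(B) − H(A,B)`,
`I(A;B|C) = H(A,C) + H(B,C) − H(A,B,C) − H(C)`. -/
theorem mutual_information_markov_identity
    {𝒳 𝒰 𝒵 𝒴 : Type*} [Fintype 𝒳] [Fintype 𝒰] [Fintype 𝒵] [Fintype 𝒴]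
    (p : 𝒳 → 𝒰 → 𝒵 → 𝒴 → ℝ)
    (hp0 : ∀ x u z y, 0 ≤ p x u z y)
    (hp1 : (∑ x, ∑ u, ∑ z, ∑ y, p x u z y) = 1)
    -- conditional independence of `U` and `Y` given `(X,Z)`
    (hCI : ∀ x z, (∑ u, ∑ y, p x u z y) ≠ 0 → ∀ u y,
      (p x u z y) / (∑ u', ∑ y', p x u' z y') =
        ((∑ y', p x u z y') / (∑ u', ∑ y', p x u' z y')) *
          ((∑ u', p x u' z y) / (∑ u', ∑ y', p x u' z y'))) :
    -- I((X,U);Y)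
    (ent (fun xu : 𝒳 × 𝒰 => ∑ z, ∑ y, p xu.1 xu.2 z y) +
        ent (fun y : 𝒴 => ∑ x, ∑ u, ∑ z, p x u z y) -
        ent (fun xuy : (𝒳 × 𝒰) × 𝒴 => ∑ z, p xuy.1.1 xuy.1.2 z xuy.2)) =
      -- I(U;Z|X) = H(U,X) + H(Z,X) − H(U,Z,X) − H(X)
      (ent (fun xu : 𝒳 × 𝒰 => ∑ z, ∑ y, p xu.1 xu.2 z y) +
          ent (fun xz : 𝒳 × 𝒵 => ∑ u, ∑ y, p xz.1 u xz.2 y) -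
          ent (fun xuz : (𝒳 × 𝒰) × 𝒵 => ∑ y, p xuz.1.1 xuz.1.2 xuz.2 y) -
          ent (fun x : 𝒳 => ∑ u, ∑ z, ∑ y, p x u z y)) +
        -- I(X;Y) = H(X) + H(Y) − H(X,Y)
        (ent (fun x : 𝒳 => ∑ u, ∑ z, ∑ y, p x u z y) +
            ent (fun y : 𝒴 => ∑ x, ∑ u, ∑ z, p x u z y) -
            ent (fun xy : 𝒳 × 𝒴 => ∑ u, ∑ z, p xy.1 u z xy.2)) -
        -- I(U;Z|(X,Y)) = H(U,(X,Y)) + H(Z,(X,Y)) − H(U,Z,(X,Y)) − H(X,Y)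
        (ent (fun xuy : (𝒳 × 𝒰) × 𝒴 => ∑ z, p xuy.1.1 xuy.1.2 z xuy.2) +
            ent (fun xzy : (𝒳 × 𝒵) × 𝒴 => ∑ u, p xzy.1.1 u xzy.1.2 xzy.2) -
            ent (fun q : ((𝒳 × 𝒰) × 𝒵) × 𝒴 => p q.1.1.1 q.1.1.2 q.1.2 q.2) -
            ent (fun xy : 𝒳 × 𝒴 => ∑ u, ∑ z, p xy.1 u z xy.2)) := by
  have main : (∑ x, ∑ u, ∑ z, Real.negMulLog (∑ y, p x u z y)) +
      (∑ x, ∑ z, ∑ y, Real.negMulLog (∑ u, p x u z y)) =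
      (∑ x, ∑ z, Real.negMulLog (∑ u, ∑ y, p x u z y)) +
        ∑ x, ∑ u, ∑ z, ∑ y, Real.negMulLog (p x u z y) := by
    rw [← Finset.sum_add_distrib, ← Finset.sum_add_distrib]
    refine Finset.sum_congr rfl fun x _ => ?_
    rw [Finset.sum_comm (f := fun u z => Real.negMulLog (∑ y, p x u z y)),
      Finset.sum_comm (f := fun u z => ∑ y, Real.negMulLog (p x u z y)),
      ← Finset.sum_add_distrib, ← Finset.sum_add_distrib]
    refine Finset.sum_congr rfl fun z _ => ?_
    refine ci_entropy_key (fun u y => p x u z y) (fun u y => hp0 x u z y) fun hs u y => ?_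
    have hS : (∑ u', ∑ y', p x u' z y') ≠ 0 := hs
    have h := hCI x z hS u y
    rw [eq_div_iff hs]
    show p x u z y * (∑ u', ∑ y', p x u' z y') =
      (∑ y', p x u z y') * (∑ u', p x u' z y)
    field_simp at h
    refine mul_right_cancel₀ hS ?_
    linear_combination (∑ u', ∑ y', p x u' z y') * h
  simp only [ent, Fintype.sum_prod_type]
  linarith [main]
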